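/- For every even integer D = 2t ≥ 2, the magic-square linear constraint system over ℤ_D with variables x_1,…,x_9 and constraints x_1+x_2+x_3=0, x_4+x_5+x_6=0, x_7+x_8+x_9=0, x_1+x_4+x_7=0, x_2+x_5+x_8=0, x_3+x_6+x_9=t has no classical solution, yet it admits a quantum solution on ℂ^D ⊗ ℂ^D consisting of two-quDit generalized Pauli operators. -/

import Mathlib

noncomputable section

/-- ω = exp(2πi/D). -/
noncomputable def rootOfUnity (D : ℕ) : ℂ := Complex.exp (2 * Real.pi * Complex.I / D)

/-- The boost operator `Z = Σ_j ω^j |j⟩⟨j|` on `ℂ^D`, as a matrix indexed by `ZMod D`. -/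
noncomputable def ZMat (D : ℕ) : Matrix (ZMod D) (ZMod D) ℂ :=
  Matrix.of fun i j => if i = j then rootOfUnity D ^ (ZMod.val j) else 0

/-- The shift operator `X = Σ_j |j+1⟩⟨j|` on `ℂ^D`, as a matrix indexed by `ZMod D`. -/
def XMat (D : ℕ) : Matrix (ZMod D) (ZMod D) ℂ :=
  Matrix.of fun i j => if i = j + 1 then 1 else 0

/-- The parity operator `Π_D = Σ_j |-j⟩⟨j|` on `ℂ^D`. -/
def parityMat (D : ℕ) : Matrix (ZMod D) (ZMod D) ℂ :=
  Matrix.of fun i j => if i = -j then 1 else 0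

/-- A single-quDit generalized Pauli operator: any matrix of the form `ω^k Z^p X^q` with
`k, p, q ∈ ℤ_D`. -/
def IsPauli1 (D : ℕ) [NeZero D] (σ : Matrix (ZMod D) (ZMod D) ℂ) : Prop :=
  ∃ k p q : ZMod D, σ = rootOfUnity D ^ k.val • (ZMat D ^ p.val * XMat D ^ q.val)

/-- The tensor product `σ₁ ⊗ ⋯ ⊗ σₙ` of `n` one-quDit matrices, as a matrix on
`(ℂ^D)^{⊗n}` indexed by `Fin n → ZMod D`. -/
noncomputable def tensorFun {D n : ℕ} (σs : Fin n → Matrix (ZMod D) (ZMod D) ℂ) :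
    Matrix (Fin n → ZMod D) (Fin n → ZMod D) ℂ :=
  Matrix.of fun f g => ∏ k, σs k (f k) (g k)

/-- An `n`-quDit generalized Pauli operator: a tensor product of `n` single-quDit
generalized Pauli operators. -/
def IsPauliN (D n : ℕ) [NeZero D]
    (σ : Matrix (Fin n → ZMod D) (Fin n → ZMod D) ℂ) : Prop :=
  ∃ σs : Fin n → Matrix (ZMod D) (ZMod D) ℂ, (∀ k, IsPauli1 D (σs k)) ∧ σ = tensorFun σs

end

/-- The coefficient matrix of the magic square LCS with all coefficients 1. -/
def msqMatrix (D : ℕ) : Matrix (Fin 6) (Fin 9) (ZMod D) :=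
  Matrix.of
    ![![1, 1, 1, 0, 0, 0, 0, 0, 0],
      ![0, 0, 0, 1, 1, 1, 0, 0, 0],
      ![0, 0, 0, 0, 0, 0, 1, 1, 1],
      ![1, 0, 0, 1, 0, 0, 1, 0, 0],
      ![0, 1, 0, 0, 1, 0, 0, 1, 0],
      ![0, 0, 1, 0, 0, 1, 0, 0, 1]]

namespace MSQaux
open Matrix

variable (D t : ℕ) [NeZero D]

lemma omega_pow_D : rootOfUnity D ^ D = 1 := by
  have hDne : (D:ℂ) ≠ 0 := Nat.cast_ne_zero.2 (NeZero.ne D)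
  rw [rootOfUnity, ← Complex.exp_nat_mul]
  rw [mul_div_assoc', mul_div_cancel_left₀ _ hDne, Complex.exp_two_pi_mul_I]

lemma omega_pow_mod (m : ℕ) : rootOfUnity D ^ (m % D) = rootOfUnity D ^ m := by
  conv_rhs => rw [← Nat.div_add_mod m D]
  rw [pow_add, pow_mul, omega_pow_D, one_pow, one_mul]

omit [NeZero D] in
lemma ZMat_diag : ZMat D = Matrix.diagonal fun j => rootOfUnity D ^ j.val := by
  ext i j
  rw [ZMat, Matrix.diagonal]
  by_cases h : i = j <;> simp [h, Matrix.of_apply]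

lemma ZMat_pow_D : ZMat D ^ D = 1 := by
  rw [ZMat_diag, Matrix.diagonal_pow]
  have : ((fun j : ZMod D => rootOfUnity D ^ j.val) ^ D) = fun _ => (1:ℂ) := by
    funext j
    rw [Pi.pow_apply, ← pow_mul, mul_comm, pow_mul, omega_pow_D, one_pow]
  rw [this, Matrix.diagonal_one]

lemma XMat_pow (n : ℕ) :
    XMat D ^ n = Matrix.of fun i j => if i = j + (n : ZMod D) then 1 else 0 := by
  induction n with
  | zero => ext i j; simp [Matrix.one_apply, eq_comm]
  | succ n ih =>
    rw [pow_succ, ih]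
    ext i j
    rw [Matrix.mul_apply]
    simp only [Matrix.of_apply, XMat, mul_ite, mul_one, mul_zero, ite_mul, one_mul, zero_mul]
    rw [Finset.sum_ite_eq' Finset.univ (j+1) (fun k => if i = k + (n:ZMod D) then (1:ℂ) else 0)]
    simp only [Finset.mem_univ, if_true]
    have h : j + 1 + (n:ZMod D) = j + ((n+1:ℕ):ZMod D) := by push_cast; ring
    rw [h]

lemma XMat_pow_D : XMat D ^ D = 1 := by
  rw [XMat_pow]
  ext i j
  simp [Matrix.one_apply, ZMod.natCast_self]

lemma ZX_comm : ZMat D * XMat D = rootOfUnity D • (XMat D * ZMat D) := by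
  ext i j
  simp only [Matrix.mul_apply, Matrix.smul_apply, ZMat, XMat, Matrix.of_apply,
    ite_mul, mul_ite, mul_one, mul_zero, zero_mul, one_mul, smul_eq_mul,
    Finset.mul_sum]
  rw [Finset.sum_ite_eq' Finset.univ (j+1) (fun x => if i = x then rootOfUnity D ^ x.val else 0),
    Finset.sum_ite_eq' Finset.univ j (fun x => if i = x + 1 then rootOfUnity D * rootOfUnity D ^ j.val else 0)]
  simp only [Finset.mem_univ, if_true]
  by_cases h : i = j + 1
  · simp only [h, if_pos rfl]
    have h2 : (j + 1 : ZMod D) = ((j.val + 1 : ℕ) : ZMod D) := by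
      push_cast [ZMod.natCast_val, ZMod.cast_id]; ring
    rw [h2, ZMod.val_natCast, omega_pow_mod, pow_succ, mul_comm]
  · simp [h]

lemma Z_Xpow_comm (b : ℕ) :
    ZMat D * XMat D ^ b = (rootOfUnity D ^ b) • (XMat D ^ b * ZMat D) := by
  induction b with
  | zero => simp
  | succ b ih =>
    rw [pow_succ, ← mul_assoc, ih, Matrix.smul_mul, mul_assoc, ZX_comm,
      Matrix.mul_smul, smul_smul, ← pow_succ, ← mul_assoc, ← pow_succ]

lemma Zpow_Xpow_comm (a b : ℕ) :
    ZMat D ^ a * XMat D ^ b = (rootOfUnity D ^ (a*b)) • (XMat D ^ b * ZMat D ^ a) := by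
  induction a with
  | zero => simp
  | succ a ih =>
    rw [pow_succ, mul_assoc, Z_Xpow_comm, Matrix.mul_smul, ← mul_assoc, ih,
      Matrix.smul_mul, smul_smul, ← pow_add, mul_assoc, ← pow_succ]
    congr 2
    ring

lemma kron_pow {p q : Type*} [Fintype p] [Fintype q] [DecidableEq p] [DecidableEq q]
    (A : Matrix p p ℂ) (B : Matrix q q ℂ) (n : ℕ) :
    (Matrix.kroneckerMap (· * ·) A B) ^ n = Matrix.kroneckerMap (· * ·) (A ^ n) (B ^ n) := by
  induction n with
  | zero => simp [Matrix.one_kronecker_one]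
  | succ n ih => rw [pow_succ, ih, ← Matrix.mul_kronecker_mul, ← pow_succ, ← pow_succ]

lemma kcomm {p : Type*} [Fintype p] [DecidableEq p]
    {M N P Q : Matrix p p ℂ} (d e : ℂ) (h1 : M*P = d•(P*M)) (h2 : N*Q = e•(Q*N))
    (hde : d*e = 1) :
    Commute (Matrix.kroneckerMap (· * ·) M N) (Matrix.kroneckerMap (· * ·) P Q) := by
  show _ = _
  rw [← Matrix.mul_kronecker_mul, ← Matrix.mul_kronecker_mul, h1, h2,
    Matrix.smul_kronecker, Matrix.kronecker_smul, smul_smul, hde, one_smul]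

lemma triv_rel {p : Type*} [Fintype p] {M P : Matrix p p ℂ} (h : M*P = P*M) :
    M*P = (1:ℂ)•(P*M) := by rw [one_smul, h]

lemma sum9 {M : Type*} [AddCommMonoid M] (f : Fin 9 → M) :
    (∑ i, f i) = f 0 + f 1 + f 2 + f 3 + f 4 + f 5 + f 6 + f 7 + f 8 := by
  rw [Fin.sum_univ_castSucc, Fin.sum_univ_eight]
  rfl

lemma prod9 {M : Type*} [Monoid M] (f : Fin 9 → M) :
    (List.ofFn f).prod = f 0 * f 1 * f 2 * f 3 * f 4 * f 5 * f 6 * f 7 * f 8 := by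
  simp [List.ofFn_succ, ← mul_assoc]

end MSQaux
set_option maxHeartbeats 4000000 in
/-- for every even `D = 2t ≥ 2`, the magic square LCS over `ℤ_D` with
constraint vector `b = (0,0,0,0,0,t)` has no classical solution, yet admits a quantum
solution on `ℂ^D ⊗ ℂ^D` consisting of two-quDit generalized Pauli operators. -/
theorem even_magicSquare_gap (D t : ℕ) [NeZero D] (ht : 0 < t) (hD : D = 2 * t) :
    (¬ ∃ x : Fin 9 → ZMod D,
        (msqMatrix D).mulVec x = ![0, 0, 0, 0, 0, (t : ZMod D)]) ∧
    (∃ A : Fin 9 → Matrix (ZMod D × ZMod D) (ZMod D × ZMod D) ℂ,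
      (∀ j, ∃ σ τ : Matrix (ZMod D) (ZMod D) ℂ,
        IsPauli1 D σ ∧ IsPauli1 D τ ∧ A j = Matrix.kroneckerMap (· * ·) σ τ) ∧
      (∀ j, A j ^ D = 1) ∧
      (∀ j k : Fin 9, (∃ i, msqMatrix D i j ≠ 0 ∧ msqMatrix D i k ≠ 0) →
        Commute (A j) (A k)) ∧
      (∀ i : Fin 6, (List.ofFn fun j => A j ^ (msqMatrix D i j).val).prod
          = rootOfUnity D ^ ((![0, 0, 0, 0, 0, (t : ZMod D)] : Fin 6 → ZMod D) i).val • 1)) := by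
  classical
  haveI : Fact (1 < D) := ⟨by omega⟩
  constructor
  · rintro ⟨x, hx⟩
    have h0 : (msqMatrix D).mulVec x 0 = 0 := by rw [hx]; rfl
    have h1 : (msqMatrix D).mulVec x 1 = 0 := by rw [hx]; rfl
    have h2 : (msqMatrix D).mulVec x 2 = 0 := by rw [hx]; rfl
    have h3 : (msqMatrix D).mulVec x 3 = 0 := by rw [hx]; rfl
    have h4 : (msqMatrix D).mulVec x 4 = 0 := by rw [hx]; rfl
    have h5 : (msqMatrix D).mulVec x 5 = (t : ZMod D) := by rw [hx]; rfl
    simp only [Matrix.mulVec, dotProduct] at h0 h1 h2 h3 h4 h5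
    rw [MSQaux.sum9] at h0 h1 h2 h3 h4 h5
    simp only [show msqMatrix D 0 0 = 1 from rfl,
      show msqMatrix D 0 1 = 1 from rfl,
      show msqMatrix D 0 2 = 1 from rfl,
      show msqMatrix D 0 3 = 0 from rfl,
      show msqMatrix D 0 4 = 0 from rfl,
      show msqMatrix D 0 5 = 0 from rfl,
      show msqMatrix D 0 6 = 0 from rfl,
      show msqMatrix D 0 7 = 0 from rfl,
      show msqMatrix D 0 8 = 0 from rfl,
      show msqMatrix D 1 0 = 0 from rfl,
      show msqMatrix D 1 1 = 0 from rfl,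
      show msqMatrix D 1 2 = 0 from rfl,
      show msqMatrix D 1 3 = 1 from rfl,
      show msqMatrix D 1 4 = 1 from rfl,
      show msqMatrix D 1 5 = 1 from rfl,
      show msqMatrix D 1 6 = 0 from rfl,
      show msqMatrix D 1 7 = 0 from rfl,
      show msqMatrix D 1 8 = 0 from rfl,
      show msqMatrix D 2 0 = 0 from rfl,
      show msqMatrix D 2 1 = 0 from rfl,
      show msqMatrix D 2 2 = 0 from rfl,
      show msqMatrix D 2 3 = 0 from rfl,
      show msqMatrix D 2 4 = 0 from rfl,
      show msqMatrix D 2 5 = 0 from rfl,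
      show msqMatrix D 2 6 = 1 from rfl,
      show msqMatrix D 2 7 = 1 from rfl,
      show msqMatrix D 2 8 = 1 from rfl,
      show msqMatrix D 3 0 = 1 from rfl,
      show msqMatrix D 3 1 = 0 from rfl,
      show msqMatrix D 3 2 = 0 from rfl,
      show msqMatrix D 3 3 = 1 from rfl,
      show msqMatrix D 3 4 = 0 from rfl,
      show msqMatrix D 3 5 = 0 from rfl,
      show msqMatrix D 3 6 = 1 from rfl,
      show msqMatrix D 3 7 = 0 from rfl,
      show msqMatrix D 3 8 = 0 from rfl,
      show msqMatrix D 4 0 = 0 from rfl,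
      show msqMatrix D 4 1 = 1 from rfl,
      show msqMatrix D 4 2 = 0 from rfl,
      show msqMatrix D 4 3 = 0 from rfl,
      show msqMatrix D 4 4 = 1 from rfl,
      show msqMatrix D 4 5 = 0 from rfl,
      show msqMatrix D 4 6 = 0 from rfl,
      show msqMatrix D 4 7 = 1 from rfl,
      show msqMatrix D 4 8 = 0 from rfl,
      show msqMatrix D 5 0 = 0 from rfl,
      show msqMatrix D 5 1 = 0 from rfl,
      show msqMatrix D 5 2 = 1 from rfl,
      show msqMatrix D 5 3 = 0 from rfl,
      show msqMatrix D 5 4 = 0 from rfl,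
      show msqMatrix D 5 5 = 1 from rfl,
      show msqMatrix D 5 6 = 0 from rfl,
      show msqMatrix D 5 7 = 0 from rfl,
      show msqMatrix D 5 8 = 1 from rfl,
      one_mul, zero_mul, add_zero, zero_add] at h0 h1 h2 h3 h4 h5
    have htz : (t : ZMod D) = 0 := by linear_combination h0 + h1 + h2 - h3 - h4 - h5
    have hdvd : D ∣ t := (ZMod.natCast_eq_zero_iff t D).1 htz
    have := Nat.le_of_dvd ht hdvd
    omega
  · have hXD : XMat D ^ D = 1 := MSQaux.XMat_pow_D D
    have hZD : ZMat D ^ D = 1 := MSQaux.ZMat_pow_D D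
    have hc2 : (rootOfUnity D ^ t) * (rootOfUnity D ^ t) = 1 := by
      rw [← pow_add, show t + t = D by omega, MSQaux.omega_pow_D]
    have hXXi : XMat D * (XMat D ^ (D-1)) = 1 := by
      rw [← pow_succ', show (D-1) + 1 = D by omega, hXD]
    have hXiX : (XMat D ^ (D-1)) * XMat D = 1 := by
      rw [← pow_succ, show (D-1) + 1 = D by omega, hXD]
    have hXiXc : XMat D * (XMat D ^ (D-1)) = (XMat D ^ (D-1)) * XMat D := by rw [hXXi, hXiX]
    have hZtZt : (ZMat D ^ t) * (ZMat D ^ t) = 1 := by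
      rw [← pow_add, show t + t = D by omega, hZD]
    have hZtX : (ZMat D ^ t) * XMat D = (rootOfUnity D ^ t) • (XMat D * (ZMat D ^ t)) := by
      have := MSQaux.Zpow_Xpow_comm D t 1
      simpa [mul_one] using this
    have hXZt : XMat D * (ZMat D ^ t) = (rootOfUnity D ^ t) • ((ZMat D ^ t) * XMat D) := by
      rw [hZtX, smul_smul, hc2, one_smul]
    have hcD1 : rootOfUnity D ^ (t * (D-1)) = (rootOfUnity D ^ t) := by
      have h1 : rootOfUnity D ^ (t*(D-1)) * (rootOfUnity D ^ t) = 1 := by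
        rw [← pow_add, show t*(D-1) + t = t*D by
            rw [← Nat.mul_succ, Nat.succ_eq_add_one, show D - 1 + 1 = D by omega],
          mul_comm t D, pow_mul, MSQaux.omega_pow_D, one_pow]
      calc rootOfUnity D ^ (t*(D-1)) = rootOfUnity D ^ (t*(D-1)) * ((rootOfUnity D ^ t) * (rootOfUnity D ^ t)) := by
            rw [hc2, mul_one]
        _ = (rootOfUnity D ^ (t*(D-1)) * (rootOfUnity D ^ t)) * (rootOfUnity D ^ t) := by ring
        _ = (rootOfUnity D ^ t) := by rw [h1, one_mul]
    have hZtXi : (ZMat D ^ t) * (XMat D ^ (D-1)) = (rootOfUnity D ^ t) • ((XMat D ^ (D-1)) * (ZMat D ^ t)) := by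
      have := MSQaux.Zpow_Xpow_comm D t (D-1)
      rwa [hcD1] at this
    have hXiZt : (XMat D ^ (D-1)) * (ZMat D ^ t) = (rootOfUnity D ^ t) • ((ZMat D ^ t) * (XMat D ^ (D-1))) := by
      rw [hZtXi, smul_smul, hc2, one_smul]
    have hZtYo : (ZMat D ^ t) * (ZMat D ^ t * XMat D) = XMat D := by rw [← mul_assoc, hZtZt, one_mul]
    have hYoZt : (ZMat D ^ t * XMat D) * (ZMat D ^ t) = (rootOfUnity D ^ t) • XMat D := by
      rw [mul_assoc, hXZt, Matrix.mul_smul, ← mul_assoc, hZtZt, one_mul]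
    have hZtYc : (ZMat D ^ t) * (ZMat D ^ t * XMat D) = (rootOfUnity D ^ t) • ((ZMat D ^ t * XMat D) * (ZMat D ^ t)) := by
      rw [hYoZt, smul_smul, hc2, one_smul, hZtYo]
    have hXiYo : (XMat D ^ (D-1)) * (ZMat D ^ t * XMat D) = (rootOfUnity D ^ t) • ((ZMat D ^ t * XMat D) * (XMat D ^ (D-1))) := by
      have e1 : (XMat D ^ (D-1)) * (ZMat D ^ t * XMat D) = (rootOfUnity D ^ t) • (ZMat D ^ t) := by
        rw [← mul_assoc, hXiZt, Matrix.smul_mul, mul_assoc, hXiX, mul_one]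
      have e2 : (ZMat D ^ t * XMat D) * (XMat D ^ (D-1)) = (ZMat D ^ t) := by
        rw [mul_assoc, hXXi, mul_one]
      rw [e1, e2]
    have hYoYo : (ZMat D ^ t * XMat D) * (ZMat D ^ t * XMat D) = (rootOfUnity D ^ t) • (XMat D * XMat D) := by
      calc (ZMat D ^ t * XMat D) * (ZMat D ^ t * XMat D) = (ZMat D ^ t) * ((XMat D * (ZMat D ^ t)) * XMat D) := by
            rw [mul_assoc, ← mul_assoc (XMat D) _ _]
        _ = (rootOfUnity D ^ t) • ((ZMat D ^ t) * ((ZMat D ^ t) * (XMat D * XMat D))) := by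
            rw [hXZt]
            simp only [Matrix.smul_mul, Matrix.mul_smul, mul_assoc]
        _ = (rootOfUnity D ^ t) • (XMat D * XMat D) := by rw [← mul_assoc, hZtZt, one_mul]
    have hXiD : (XMat D ^ (D-1)) ^ D = 1 := by
      rw [← pow_mul, mul_comm, pow_mul, hXD, one_pow]
    have hZtD : (ZMat D ^ t) ^ D = 1 := by
      rw [← pow_mul, mul_comm, pow_mul, hZD, one_pow]
    have hYoD : (ZMat D ^ t * XMat D) ^ D = (rootOfUnity D ^ t) ^ t • 1 := by
      have e1 : (ZMat D ^ t * XMat D) ^ (2*t) = (rootOfUnity D ^ t) ^ t • 1 := by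
        rw [pow_mul, pow_two, hYoYo, smul_pow]
        congr 1
        rw [← pow_two, ← pow_mul, show 2 * t = D from hD.symm, hXD]
      exact (congrArg (fun n => (ZMat D ^ t * XMat D) ^ n) hD).trans e1
    have p1 : IsPauli1 D 1 := ⟨0, 0, 0, by simp⟩
    have pX : IsPauli1 D (XMat D) := ⟨0, 0, 1, by simp [ZMod.val_one]⟩
    have pXi : IsPauli1 D ((XMat D ^ (D-1))) :=
      ⟨0, 0, ((D-1 : ℕ) : ZMod D), by
        simp [ZMod.val_natCast, Nat.mod_eq_of_lt (show D-1 < D by omega)]⟩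
    have pZt : IsPauli1 D ((ZMat D ^ t)) :=
      ⟨0, (t : ZMod D), 0, by
        simp [ZMod.val_natCast, Nat.mod_eq_of_lt (show t < D by omega)]⟩
    have pYo : IsPauli1 D ((ZMat D ^ t * XMat D)) :=
      ⟨0, (t : ZMod D), 1, by
        simp [ZMod.val_natCast, ZMod.val_one, Nat.mod_eq_of_lt (show t < D by omega)]⟩
    have C01 : Commute (Matrix.kroneckerMap (· * ·) (XMat D) 1) (Matrix.kroneckerMap (· * ·) 1 (ZMat D ^ t)) :=
      MSQaux.kcomm 1 1 (MSQaux.triv_rel (by first | rw [one_mul, mul_one] | rw [mul_one, one_mul])) (MSQaux.triv_rel (by first | rw [one_mul, mul_one] | rw [mul_one, one_mul])) (by rw [one_mul])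
    have C02 : Commute (Matrix.kroneckerMap (· * ·) (XMat D) 1) (Matrix.kroneckerMap (· * ·) (XMat D ^ (D-1)) (ZMat D ^ t)) :=
      MSQaux.kcomm 1 1 (MSQaux.triv_rel hXiXc) (MSQaux.triv_rel (by first | rw [one_mul, mul_one] | rw [mul_one, one_mul])) (by rw [one_mul])
    have C12 : Commute (Matrix.kroneckerMap (· * ·) 1 (ZMat D ^ t)) (Matrix.kroneckerMap (· * ·) (XMat D ^ (D-1)) (ZMat D ^ t)) :=
      MSQaux.kcomm 1 1 (MSQaux.triv_rel (by first | rw [one_mul, mul_one] | rw [mul_one, one_mul])) (MSQaux.triv_rel rfl) (by rw [one_mul])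
    have C34 : Commute (Matrix.kroneckerMap (· * ·) 1 (XMat D)) (Matrix.kroneckerMap (· * ·) (ZMat D ^ t) 1) :=
      MSQaux.kcomm 1 1 (MSQaux.triv_rel (by first | rw [one_mul, mul_one] | rw [mul_one, one_mul])) (MSQaux.triv_rel (by first | rw [one_mul, mul_one] | rw [mul_one, one_mul])) (by rw [one_mul])
    have C35 : Commute (Matrix.kroneckerMap (· * ·) 1 (XMat D)) (Matrix.kroneckerMap (· * ·) (ZMat D ^ t) (XMat D ^ (D-1))) :=
      MSQaux.kcomm 1 1 (MSQaux.triv_rel (by first | rw [one_mul, mul_one] | rw [mul_one, one_mul])) (MSQaux.triv_rel hXiXc) (by rw [one_mul])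
    have C45 : Commute (Matrix.kroneckerMap (· * ·) (ZMat D ^ t) 1) (Matrix.kroneckerMap (· * ·) (ZMat D ^ t) (XMat D ^ (D-1))) :=
      MSQaux.kcomm 1 1 (MSQaux.triv_rel rfl) (MSQaux.triv_rel (by first | rw [one_mul, mul_one] | rw [mul_one, one_mul])) (by rw [one_mul])
    have C67 : Commute (Matrix.kroneckerMap (· * ·) (XMat D ^ (D-1)) (XMat D ^ (D-1))) (Matrix.kroneckerMap (· * ·) (ZMat D ^ t) (ZMat D ^ t)) :=
      MSQaux.kcomm (rootOfUnity D ^ t) (rootOfUnity D ^ t) hXiZt hXiZt hc2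
    have C68 : Commute (Matrix.kroneckerMap (· * ·) (XMat D ^ (D-1)) (XMat D ^ (D-1))) (Matrix.kroneckerMap (· * ·) (ZMat D ^ t * XMat D) (ZMat D ^ t * XMat D)) :=
      MSQaux.kcomm (rootOfUnity D ^ t) (rootOfUnity D ^ t) hXiYo hXiYo hc2
    have C78 : Commute (Matrix.kroneckerMap (· * ·) (ZMat D ^ t) (ZMat D ^ t)) (Matrix.kroneckerMap (· * ·) (ZMat D ^ t * XMat D) (ZMat D ^ t * XMat D)) :=
      MSQaux.kcomm (rootOfUnity D ^ t) (rootOfUnity D ^ t) hZtYc hZtYc hc2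
    have C03 : Commute (Matrix.kroneckerMap (· * ·) (XMat D) 1) (Matrix.kroneckerMap (· * ·) 1 (XMat D)) :=
      MSQaux.kcomm 1 1 (MSQaux.triv_rel (by first | rw [one_mul, mul_one] | rw [mul_one, one_mul])) (MSQaux.triv_rel (by first | rw [one_mul, mul_one] | rw [mul_one, one_mul])) (by rw [one_mul])
    have C06 : Commute (Matrix.kroneckerMap (· * ·) (XMat D) 1) (Matrix.kroneckerMap (· * ·) (XMat D ^ (D-1)) (XMat D ^ (D-1))) :=
      MSQaux.kcomm 1 1 (MSQaux.triv_rel hXiXc) (MSQaux.triv_rel (by first | rw [one_mul, mul_one] | rw [mul_one, one_mul])) (by rw [one_mul])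
    have C36 : Commute (Matrix.kroneckerMap (· * ·) 1 (XMat D)) (Matrix.kroneckerMap (· * ·) (XMat D ^ (D-1)) (XMat D ^ (D-1))) :=
      MSQaux.kcomm 1 1 (MSQaux.triv_rel (by first | rw [one_mul, mul_one] | rw [mul_one, one_mul])) (MSQaux.triv_rel hXiXc) (by rw [one_mul])
    have C14 : Commute (Matrix.kroneckerMap (· * ·) 1 (ZMat D ^ t)) (Matrix.kroneckerMap (· * ·) (ZMat D ^ t) 1) :=
      MSQaux.kcomm 1 1 (MSQaux.triv_rel (by first | rw [one_mul, mul_one] | rw [mul_one, one_mul])) (MSQaux.triv_rel (by first | rw [one_mul, mul_one] | rw [mul_one, one_mul])) (by rw [one_mul])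
    have C17 : Commute (Matrix.kroneckerMap (· * ·) 1 (ZMat D ^ t)) (Matrix.kroneckerMap (· * ·) (ZMat D ^ t) (ZMat D ^ t)) :=
      MSQaux.kcomm 1 1 (MSQaux.triv_rel (by first | rw [one_mul, mul_one] | rw [mul_one, one_mul])) (MSQaux.triv_rel rfl) (by rw [one_mul])
    have C47 : Commute (Matrix.kroneckerMap (· * ·) (ZMat D ^ t) 1) (Matrix.kroneckerMap (· * ·) (ZMat D ^ t) (ZMat D ^ t)) :=
      MSQaux.kcomm 1 1 (MSQaux.triv_rel rfl) (MSQaux.triv_rel (by first | rw [one_mul, mul_one] | rw [mul_one, one_mul])) (by rw [one_mul])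
    have C25 : Commute (Matrix.kroneckerMap (· * ·) (XMat D ^ (D-1)) (ZMat D ^ t)) (Matrix.kroneckerMap (· * ·) (ZMat D ^ t) (XMat D ^ (D-1))) :=
      MSQaux.kcomm (rootOfUnity D ^ t) (rootOfUnity D ^ t) hXiZt hZtXi hc2
    have C28 : Commute (Matrix.kroneckerMap (· * ·) (XMat D ^ (D-1)) (ZMat D ^ t)) (Matrix.kroneckerMap (· * ·) (ZMat D ^ t * XMat D) (ZMat D ^ t * XMat D)) :=
      MSQaux.kcomm (rootOfUnity D ^ t) (rootOfUnity D ^ t) hXiYo hZtYc hc2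
    have C58 : Commute (Matrix.kroneckerMap (· * ·) (ZMat D ^ t) (XMat D ^ (D-1))) (Matrix.kroneckerMap (· * ·) (ZMat D ^ t * XMat D) (ZMat D ^ t * XMat D)) :=
      MSQaux.kcomm (rootOfUnity D ^ t) (rootOfUnity D ^ t) hZtYc hXiYo hc2
    refine ⟨![(Matrix.kroneckerMap (· * ·) (XMat D) 1), (Matrix.kroneckerMap (· * ·) 1 (ZMat D ^ t)), (Matrix.kroneckerMap (· * ·) (XMat D ^ (D-1)) (ZMat D ^ t)), (Matrix.kroneckerMap (· * ·) 1 (XMat D)), (Matrix.kroneckerMap (· * ·) (ZMat D ^ t) 1), (Matrix.kroneckerMap (· * ·) (ZMat D ^ t) (XMat D ^ (D-1))), (Matrix.kroneckerMap (· * ·) (XMat D ^ (D-1)) (XMat D ^ (D-1))), (Matrix.kroneckerMap (· * ·) (ZMat D ^ t) (ZMat D ^ t)), (Matrix.kroneckerMap (· * ·) (ZMat D ^ t * XMat D) (ZMat D ^ t * XMat D))], ?_, ?_, ?_, ?_⟩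
    · intro j
      fin_cases j
      · exact ⟨_, _, pX, p1, rfl⟩
      · exact ⟨_, _, p1, pZt, rfl⟩
      · exact ⟨_, _, pXi, pZt, rfl⟩
      · exact ⟨_, _, p1, pX, rfl⟩
      · exact ⟨_, _, pZt, p1, rfl⟩
      · exact ⟨_, _, pZt, pXi, rfl⟩
      · exact ⟨_, _, pXi, pXi, rfl⟩
      · exact ⟨_, _, pZt, pZt, rfl⟩
      · exact ⟨_, _, pYo, pYo, rfl⟩
    · intro j
      fin_cases j
      · show (Matrix.kroneckerMap (· * ·) (XMat D) 1) ^ D = 1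
        rw [MSQaux.kron_pow, hXD, one_pow D]
        exact Matrix.one_kronecker_one
      · show (Matrix.kroneckerMap (· * ·) 1 (ZMat D ^ t)) ^ D = 1
        rw [MSQaux.kron_pow, one_pow D, hZtD]
        exact Matrix.one_kronecker_one
      · show (Matrix.kroneckerMap (· * ·) (XMat D ^ (D-1)) (ZMat D ^ t)) ^ D = 1
        rw [MSQaux.kron_pow, hXiD, hZtD]
        exact Matrix.one_kronecker_one
      · show (Matrix.kroneckerMap (· * ·) 1 (XMat D)) ^ D = 1
        rw [MSQaux.kron_pow, one_pow D, hXD]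
        exact Matrix.one_kronecker_one
      · show (Matrix.kroneckerMap (· * ·) (ZMat D ^ t) 1) ^ D = 1
        rw [MSQaux.kron_pow, hZtD, one_pow D]
        exact Matrix.one_kronecker_one
      · show (Matrix.kroneckerMap (· * ·) (ZMat D ^ t) (XMat D ^ (D-1))) ^ D = 1
        rw [MSQaux.kron_pow, hZtD, hXiD]
        exact Matrix.one_kronecker_one
      · show (Matrix.kroneckerMap (· * ·) (XMat D ^ (D-1)) (XMat D ^ (D-1))) ^ D = 1
        rw [MSQaux.kron_pow, hXiD]
        exact Matrix.one_kronecker_one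
      · show (Matrix.kroneckerMap (· * ·) (ZMat D ^ t) (ZMat D ^ t)) ^ D = 1
        rw [MSQaux.kron_pow, hZtD]
        exact Matrix.one_kronecker_one
      · show (Matrix.kroneckerMap (· * ·) (ZMat D ^ t * XMat D) (ZMat D ^ t * XMat D)) ^ D = 1
        rw [MSQaux.kron_pow, hYoD, Matrix.smul_kronecker, Matrix.kronecker_smul,
          Matrix.one_kronecker_one, smul_smul, ← mul_pow, hc2, one_pow, one_smul]
    · intro j k h
      obtain ⟨i, hj, hk⟩ := h
      clear hXD hZD hc2 hXXi hXiX hXiXc hZtZt hZtX hXZt hcD1 hZtXi hXiZt hZtYo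
      clear hYoZt hZtYc hXiYo hYoYo hXiD hZtD hYoD p1 pX pXi pZt pYo
      fin_cases i <;> fin_cases j <;> fin_cases k <;>
        first
          | exact absurd rfl hj
          | exact absurd rfl hk
          | exact Commute.refl _
          | exact C01
          | exact C01.symm
          | exact C02
          | exact C02.symm
          | exact C12
          | exact C12.symm
          | exact C34
          | exact C34.symm
          | exact C35
          | exact C35.symm
          | exact C45
          | exact C45.symm
          | exact C67
          | exact C67.symm
          | exact C68
          | exact C68.symm
          | exact C78
          | exact C78.symm
          | exact C03
          | exact C03.symm
          | exact C06
          | exact C06.symm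
          | exact C36
          | exact C36.symm
          | exact C14
          | exact C14.symm
          | exact C17
          | exact C17.symm
          | exact C47
          | exact C47.symm
          | exact C25
          | exact C25.symm
          | exact C28
          | exact C28.symm
          | exact C58
          | exact C58.symm
    · have hrow2f : ((XMat D ^ (D-1)) * (ZMat D ^ t)) * (ZMat D ^ t * XMat D) = 1 := by
        rw [mul_assoc, hZtYo, hXiX]
      have hcol2f : ((ZMat D ^ t) * (XMat D ^ (D-1))) * (ZMat D ^ t * XMat D) = (rootOfUnity D ^ t) • 1 := by
        rw [hZtXi, Matrix.smul_mul, hrow2f]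
      intro i
      fin_cases i
      · rw [MSQaux.prod9]
        show (Matrix.kroneckerMap (· * ·) (XMat D) 1) ^ (1 : ZMod D).val * (Matrix.kroneckerMap (· * ·) 1 (ZMat D ^ t)) ^ (1 : ZMod D).val * (Matrix.kroneckerMap (· * ·) (XMat D ^ (D-1)) (ZMat D ^ t)) ^ (1 : ZMod D).val * (Matrix.kroneckerMap (· * ·) 1 (XMat D)) ^ (0 : ZMod D).val * (Matrix.kroneckerMap (· * ·) (ZMat D ^ t) 1) ^ (0 : ZMod D).val * (Matrix.kroneckerMap (· * ·) (ZMat D ^ t) (XMat D ^ (D-1))) ^ (0 : ZMod D).val * (Matrix.kroneckerMap (· * ·) (XMat D ^ (D-1)) (XMat D ^ (D-1))) ^ (0 : ZMod D).val * (Matrix.kroneckerMap (· * ·) (ZMat D ^ t) (ZMat D ^ t)) ^ (0 : ZMod D).val * (Matrix.kroneckerMap (· * ·) (ZMat D ^ t * XMat D) (ZMat D ^ t * XMat D)) ^ (0 : ZMod D).val = rootOfUnity D ^ (0 : ZMod D).val • 1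
        simp only [ZMod.val_zero, ZMod.val_one, pow_zero, pow_one, mul_one, one_mul, one_smul]
        rw [← Matrix.mul_kronecker_mul, ← Matrix.mul_kronecker_mul]
        first | simp only [mul_one, one_mul] | skip
        rw [hXXi, hZtZt]
        exact Matrix.one_kronecker_one
      · rw [MSQaux.prod9]
        show (Matrix.kroneckerMap (· * ·) (XMat D) 1) ^ (0 : ZMod D).val * (Matrix.kroneckerMap (· * ·) 1 (ZMat D ^ t)) ^ (0 : ZMod D).val * (Matrix.kroneckerMap (· * ·) (XMat D ^ (D-1)) (ZMat D ^ t)) ^ (0 : ZMod D).val * (Matrix.kroneckerMap (· * ·) 1 (XMat D)) ^ (1 : ZMod D).val * (Matrix.kroneckerMap (· * ·) (ZMat D ^ t) 1) ^ (1 : ZMod D).val * (Matrix.kroneckerMap (· * ·) (ZMat D ^ t) (XMat D ^ (D-1))) ^ (1 : ZMod D).val * (Matrix.kroneckerMap (· * ·) (XMat D ^ (D-1)) (XMat D ^ (D-1))) ^ (0 : ZMod D).val * (Matrix.kroneckerMap (· * ·) (ZMat D ^ t) (ZMat D ^ t)) ^ (0 : ZMod D).val * (Matrix.kroneckerMap (·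 * ·) (ZMat D ^ t * XMat D) (ZMat D ^ t * XMat D)) ^ (0 : ZMod D).val = rootOfUnity D ^ (0 : ZMod D).val • 1
        simp only [ZMod.val_zero, ZMod.val_one, pow_zero, pow_one, mul_one, one_mul, one_smul]
        rw [← Matrix.mul_kronecker_mul, ← Matrix.mul_kronecker_mul]
        first | simp only [mul_one, one_mul] | skip
        rw [hZtZt, hXXi]
        exact Matrix.one_kronecker_one
      · rw [MSQaux.prod9]
        show (Matrix.kroneckerMap (· * ·) (XMat D) 1) ^ (0 : ZMod D).val * (Matrix.kroneckerMap (· * ·) 1 (ZMat D ^ t)) ^ (0 : ZMod D).val * (Matrix.kroneckerMap (· * ·) (XMat D ^ (D-1)) (ZMat D ^ t)) ^ (0 : ZMod D).val * (Matrix.kroneckerMap (· * ·) 1 (XMat D)) ^ (0 : ZMod D).val * (Matrix.kroneckerMap (· * ·) (ZMat D ^ t) 1) ^ (0 : ZMod D).val * (Matrix.kroneckerMap (· * ·) (ZMat D ^ t) (XMat D ^ (D-1))) ^ (0 : ZMod D).val * (Matrix.kroneckerMap (· * ·) (XMat D ^ (D-1)) (XMat D ^ (D-1))) ^ (1 : ZMod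 D).val * (Matrix.kroneckerMap (· * ·) (ZMat D ^ t) (ZMat D ^ t)) ^ (1 : ZMod D).val * (Matrix.kroneckerMap (· * ·) (ZMat D ^ t * XMat D) (ZMat D ^ t * XMat D)) ^ (1 : ZMod D).val = rootOfUnity D ^ (0 : ZMod D).val • 1
        simp only [ZMod.val_zero, ZMod.val_one, pow_zero, pow_one, mul_one, one_mul, one_smul]
        rw [← Matrix.mul_kronecker_mul, ← Matrix.mul_kronecker_mul]
        first | simp only [mul_one, one_mul] | skip
        rw [hrow2f]
        exact Matrix.one_kronecker_one
      · rw [MSQaux.prod9]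
        show (Matrix.kroneckerMap (· * ·) (XMat D) 1) ^ (1 : ZMod D).val * (Matrix.kroneckerMap (· * ·) 1 (ZMat D ^ t)) ^ (0 : ZMod D).val * (Matrix.kroneckerMap (· * ·) (XMat D ^ (D-1)) (ZMat D ^ t)) ^ (0 : ZMod D).val * (Matrix.kroneckerMap (· * ·) 1 (XMat D)) ^ (1 : ZMod D).val * (Matrix.kroneckerMap (· * ·) (ZMat D ^ t) 1) ^ (0 : ZMod D).val * (Matrix.kroneckerMap (· * ·) (ZMat D ^ t) (XMat D ^ (D-1))) ^ (0 : ZMod D).val * (Matrix.kroneckerMap (· * ·) (XMat D ^ (D-1)) (XMat D ^ (D-1))) ^ (1 : ZMod D).val * (Matrix.kroneckerMap (· * ·) (ZMat D ^ t) (ZMat D ^ t)) ^ (0 : ZMod D).val * (Matrix.kroneckerMap (· * ·) (ZMat D ^ t * XMat D) (ZMat D ^ t * XMat D)) ^ (0 : ZMod D).val = rootOfUnity D ^ (0 : ZMod D).val • 1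
        simp only [ZMod.val_zero, ZMod.val_one, pow_zero, pow_one, mul_one, one_mul, one_smul]
        rw [← Matrix.mul_kronecker_mul, ← Matrix.mul_kronecker_mul]
        first | simp only [mul_one, one_mul] | skip
        rw [hXXi]
        exact Matrix.one_kronecker_one
      · rw [MSQaux.prod9]
        show (Matrix.kroneckerMap (· * ·) (XMat D) 1) ^ (0 : ZMod D).val * (Matrix.kroneckerMap (· * ·) 1 (ZMat D ^ t)) ^ (1 : ZMod D).val * (Matrix.kroneckerMap (· * ·) (XMat D ^ (D-1)) (ZMat D ^ t)) ^ (0 : ZMod D).val * (Matrix.kroneckerMap (· * ·) 1 (XMat D)) ^ (0 : ZMod D).val * (Matrix.kroneckerMap (· * ·) (ZMat D ^ t) 1) ^ (1 : ZMod D).val * (Matrix.kroneckerMap (· * ·) (ZMat D ^ t) (XMat D ^ (D-1))) ^ (0 : ZMod D).val * (Matrix.kroneckerMap (· * ·) (XMat D ^ (D-1)) (XMat D ^ (D-1))) ^ (0 : ZMod D).val * (Matrix.kroneckerMap (· * ·) (ZMat D ^ t) (ZMat D ^ t)) ^ (1 : ZMod D).val * (Matrix.kroneckerMap (· * ·) (ZMat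 D ^ t * XMat D) (ZMat D ^ t * XMat D)) ^ (0 : ZMod D).val = rootOfUnity D ^ (0 : ZMod D).val • 1
        simp only [ZMod.val_zero, ZMod.val_one, pow_zero, pow_one, mul_one, one_mul, one_smul]
        rw [← Matrix.mul_kronecker_mul, ← Matrix.mul_kronecker_mul]
        first | simp only [mul_one, one_mul] | skip
        rw [hZtZt]
        exact Matrix.one_kronecker_one
      · rw [MSQaux.prod9]
        show (Matrix.kroneckerMap (· * ·) (XMat D) 1) ^ (0 : ZMod D).val * (Matrix.kroneckerMap (· * ·) 1 (ZMat D ^ t)) ^ (0 : ZMod D).val * (Matrix.kroneckerMap (· * ·) (XMat D ^ (D-1)) (ZMat D ^ t)) ^ (1 : ZMod D).val * (Matrix.kroneckerMap (· * ·) 1 (XMat D)) ^ (0 : ZMod D).val * (Matrix.kroneckerMap (· * ·) (ZMat D ^ t) 1) ^ (0 : ZMod D).val * (Matrix.kroneckerMap (· * ·) (ZMat D ^ t) (XMat D ^ (D-1))) ^ (1 : ZMod D).val * (Matrix.kroneckerMap (· * ·) (XMat D ^ (D-1)) (XMat D ^ (D-1))) ^ (0 : ZMod D).val * (Matrix.kroneckerMap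 (· * ·) (ZMat D ^ t) (ZMat D ^ t)) ^ (0 : ZMod D).val * (Matrix.kroneckerMap (· * ·) (ZMat D ^ t * XMat D) (ZMat D ^ t * XMat D)) ^ (1 : ZMod D).val = rootOfUnity D ^ ((t : ZMod D)).val • 1
        simp only [ZMod.val_zero, ZMod.val_one, pow_zero, pow_one, mul_one, one_mul, one_smul]
        rw [ZMod.val_natCast, Nat.mod_eq_of_lt (show t < D by omega)]
        rw [← Matrix.mul_kronecker_mul, ← Matrix.mul_kronecker_mul]
        first | simp only [mul_one, one_mul] | skip
        rw [hrow2f, hcol2f, Matrix.kronecker_smul, Matrix.one_kronecker_one]
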